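/- Let X_1,...,X_n be i.i.d. integrable random variables with mean zero and S_k = X_1+...+X_k. Then E[max_{1≤k≤n} S_k] ≤ 270 E|S_n|. -/

import Mathlib

open MeasureTheory ProbabilityTheory Finset
open scoped ENNReal NNReal

lemma jensen_abs_add_indep {Ω : Type*} [MeasureSpace Ω] [IsProbabilityMeasure (ℙ : Measure Ω)]
    {f g : Ω → ℝ} (hfm : Measurable f) (hgm : Measurable g)
    (hf : Integrable f ℙ) (hg : Integrable g ℙ) (hind : IndepFun f g ℙ)
    (hg0 : ∫ ω, g ω = 0) :
    ∫ ω, |f ω| ≤ ∫ ω, |f ω + g ω| := by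
  have h2 : IsProbabilityMeasure (Measure.map f ℙ) := Measure.isProbabilityMeasure_map hfm.aemeasurable
  have h3 : IsProbabilityMeasure (Measure.map g ℙ) := Measure.isProbabilityMeasure_map hgm.aemeasurable
  have hmap : Measure.map (fun ω => (f ω, g ω)) ℙ = (Measure.map f ℙ).prod (Measure.map g ℙ) :=
    (indepFun_iff_map_prod_eq_prod_map_map hfm.aemeasurable hgm.aemeasurable).mp hind
  set ν := Measure.map f ℙ with hν
  set ρ := Measure.map g ℙ with hρ
  have hpair : AEMeasurable (fun ω => (f ω, g ω)) ℙ := (hfm.prodMk hgm).aemeasurable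
  have hFc : Continuous (fun p : ℝ × ℝ => |p.1 + p.2|) := by continuity
  have hFint : Integrable (fun p : ℝ × ℝ => |p.1 + p.2|) (ν.prod ρ) := by
    rw [← hmap, integrable_map_measure hFc.aestronglyMeasurable hpair]
    exact (hf.add hg).abs
  have hEq1 : ∫ ω, |f ω + g ω| = ∫ p : ℝ × ℝ, |p.1 + p.2| ∂(ν.prod ρ) := by
    rw [← hmap, integral_map hpair hFc.aestronglyMeasurable]
  have hEq2 : ∫ p : ℝ × ℝ, |p.1 + p.2| ∂(ν.prod ρ) = ∫ x, (∫ y, |x + y| ∂ρ) ∂ν :=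
    integral_prod _ hFint
  have hgint' : Integrable (fun y : ℝ => y) ρ :=
    (integrable_map_measure aestronglyMeasurable_id hgm.aemeasurable).mpr hg
  have hgmean' : ∫ y : ℝ, y ∂ρ = 0 :=
    (integral_map hgm.aemeasurable aestronglyMeasurable_id).trans hg0
  have hptwise : ∀ x : ℝ, |x| ≤ ∫ y, |x + y| ∂ρ := by
    intro x
    have h1 : ∫ y, (x + y) ∂ρ = x := by
      rw [integral_add (integrable_const x) hgint', integral_const, hgmean']
      simp
    calc |x| = |∫ y, (x + y) ∂ρ| := by rw [h1]
      _ ≤ ∫ y, |x + y| ∂ρ := by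
          simpa [Real.norm_eq_abs] using norm_integral_le_integral_norm (μ := ρ) (fun y => x + y)
  have hfabs : Integrable (fun x : ℝ => |x|) ν := by
    rw [hν, integrable_map_measure continuous_abs.aestronglyMeasurable hfm.aemeasurable]
    exact hf.abs
  have hinner : Integrable (fun x => ∫ y, |x + y| ∂ρ) ν := hFint.integral_prod_left
  have hEq0 : ∫ ω, |f ω| = ∫ x, |x| ∂ν := by
    rw [hν, integral_map hfm.aemeasurable continuous_abs.aestronglyMeasurable]
  rw [hEq0, hEq1, hEq2]
  exact integral_mono hfabs hinner hptwise


/-- For i.i.d. integrable mean-zero variables,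
`E[max_{1≤k≤n} S_k] ≤ 270 E|S_n|` (via the Montgomery-Smith maximal inequality). -/
theorem expectation_max_le_montgomery_smith
    {Ω : Type*} [MeasureSpace Ω] [IsProbabilityMeasure (ℙ : Measure Ω)]
    (n : ℕ) (hn : 1 ≤ n)
    (X : ℕ → Ω → ℝ) (hmeas : ∀ i, Measurable (X i))
    (hindep : iIndepFun X ℙ)
    (hid : ∀ i, IdentDistrib (X i) (X 1) ℙ ℙ)
    (hint : Integrable (X 1) ℙ)
    (hmean : ∫ ω, X 1 ω = 0)
    (S : ℕ → Ω → ℝ) (hS : ∀ k ω, S k ω = ∑ i ∈ Finset.Icc 1 k, X i ω)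
    (hne : (Finset.Icc 1 n).Nonempty) :
    (∫ ω, (Finset.Icc 1 n).sup' hne (fun k => S k ω)) ≤ 270 * ∫ ω, |S n ω| := by
  classical
  set M : Ω → ℝ := fun ω => (Finset.Icc 1 n).sup' hne (fun k => S k ω) with hM
  set a : ℝ := ∫ ω, |S n ω| with ha
  -- basic facts
  have hXint : ∀ i, Integrable (X i) ℙ := fun i => (hid i).integrable_iff.mpr hint
  have hXmean : ∀ i, ∫ ω, X i ω = 0 := fun i => (hid i).integral_eq.trans hmean
  have hSfun : ∀ k, S k = fun ω => ∑ i ∈ Finset.Icc 1 k, X i ω := fun k => funext (hS k)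
  have hSmeas : ∀ k, Measurable (S k) := fun k => by
    rw [hSfun]; exact Finset.measurable_sum _ fun i _ => hmeas i
  have hSint : ∀ k, Integrable (S k) ℙ := fun k => by
    rw [hSfun]; exact integrable_finset_sum _ fun i _ => hXint i
  have hSmean : ∀ k, ∫ ω, S k ω = 0 := fun k => by
    rw [hSfun]
    rw [integral_finset_sum _ fun i _ => hXint i]
    simp [hXmean]
  set T : ℕ → Ω → ℝ := fun k ω => ∑ i ∈ Finset.Ioc k n, X i ω with hT
  have hTmeas : ∀ k, Measurable (T k) := fun k => Finset.measurable_sum _ fun i _ => hmeas i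
  have hTint : ∀ k, Integrable (T k) ℙ := fun k => integrable_finset_sum _ fun i _ => hXint i
  have hTmean : ∀ k, ∫ ω, T k ω = 0 := fun k => by
    rw [show (fun ω => T k ω) = fun ω => ∑ i ∈ Finset.Ioc k n, X i ω from rfl]
    rw [integral_finset_sum _ fun i _ => hXint i]
    simp [hXmean]
  have hIccIoc : ∀ m : ℕ, Finset.Icc 1 m = Finset.Ioc 0 m := by
    intro m; ext x; simp [Finset.mem_Icc, Finset.mem_Ioc]; omega
  have hsplit : ∀ k, k ≤ n → ∀ ω, S n ω = S k ω + T k ω := by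
    intro k hk ω
    have hd : Disjoint (Finset.Ioc 0 k) (Finset.Ioc k n) := by
      rw [Finset.disjoint_left]
      intro i hi hi2
      simp only [Finset.mem_Ioc] at hi hi2
      omega
    rw [hS, hS, hIccIoc, hIccIoc, ← Finset.sum_union hd,
      Finset.Ioc_union_Ioc_eq_Ioc (Nat.zero_le k) hk]
  -- independence
  have hdisjkn : ∀ k : ℕ, Disjoint (Finset.Icc 1 k) (Finset.Ioc k n) := by
    intro k
    rw [Finset.disjoint_left]
    intro i hi hi2
    simp only [Finset.mem_Icc] at hi
    simp only [Finset.mem_Ioc] at hi2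
    omega
  have hbase : ∀ k, IndepFun (fun ω (i : ↥(Finset.Icc 1 k)) => X i ω)
      (fun ω (i : ↥(Finset.Ioc k n)) => X i ω) ℙ :=
    fun k => hindep.indepFun_finset _ _ (hdisjkn k) hmeas
  have hsumW : ∀ k, ((fun v : (↥(Finset.Ioc k n) → ℝ) => ∑ i, v i) ∘
      (fun ω (i : ↥(Finset.Ioc k n)) => X i ω)) = T k := by
    intro k; funext ω
    simp only [Function.comp_apply]
    show _ = ∑ i ∈ Finset.Ioc k n, X i ω
    exact Finset.sum_coe_sort (Finset.Ioc k n) (fun m => X m ω)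
  have hsumV : ∀ k, ((fun v : (↥(Finset.Icc 1 k) → ℝ) => ∑ i, v i) ∘
      (fun ω (i : ↥(Finset.Icc 1 k)) => X i ω)) = S k := by
    intro k; funext ω
    simp only [Function.comp_apply]
    rw [hS]
    exact Finset.sum_coe_sort (Finset.Icc 1 k) (fun m => X m ω)
  have hVT : ∀ k, IndepFun (fun ω (i : ↥(Finset.Icc 1 k)) => X i ω) (T k) ℙ := by
    intro k
    have hcomp := (hbase k).comp measurable_id
      (Finset.measurable_sum Finset.univ fun (i : ↥(Finset.Ioc k n)) _ =>
        measurable_pi_apply i)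
    rwa [hsumW k, Function.id_comp] at hcomp
  have hST : ∀ k, IndepFun (S k) (T k) ℙ := by
    intro k
    have hcomp := (hbase k).comp
      (Finset.measurable_sum Finset.univ fun (i : ↥(Finset.Icc 1 k)) _ =>
        measurable_pi_apply i)
      (Finset.measurable_sum Finset.univ fun (i : ↥(Finset.Ioc k n)) _ =>
        measurable_pi_apply i)
    rwa [hsumW k, hsumV k] at hcomp
  -- Jensen-type bounds
  have hJS : ∀ k, k ≤ n → ∫ ω, |S k ω| ≤ a := by
    intro k hk
    have h := jensen_abs_add_indep (hSmeas k) (hTmeas k) (hSint k) (hTint k) (hST k) (hTmean k)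
    calc ∫ ω, |S k ω| ≤ ∫ ω, |S k ω + T k ω| := h
      _ = a := by
        rw [ha]
        apply integral_congr_ae
        filter_upwards with ω
        rw [hsplit k hk ω]
  have hJT : ∀ k, k ≤ n → ∫ ω, |T k ω| ≤ a := by
    intro k hk
    have h := jensen_abs_add_indep (hTmeas k) (hSmeas k) (hTint k) (hSint k)
      (hST k).symm (hSmean k)
    calc ∫ ω, |T k ω| ≤ ∫ ω, |T k ω + S k ω| := h
      _ = a := by
        rw [ha]
        apply integral_congr_ae
        filter_upwards with ω
        rw [hsplit k hk ω, add_comm]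
  have ha0 : 0 ≤ a := integral_nonneg fun ω => abs_nonneg _
  show ∫ ω, M ω ≤ 270 * a
  rcases eq_or_lt_of_le ha0 with hzero | hpos
  · -- degenerate case : a = 0
    have hae : ∀ᵐ ω ∂ℙ, ∀ k ∈ Finset.Icc 1 n, S k ω = 0 := by
      rw [Finset.eventually_all]
      intro k hk
      have hk' := (Finset.mem_Icc.mp hk).2
      have h1 : ∫ ω, |S k ω| = 0 :=
        le_antisymm (by rw [hzero]; exact hJS k hk')
          (integral_nonneg fun ω => abs_nonneg _)
      have h2 := (integral_eq_zero_iff_of_nonneg (fun ω => abs_nonneg (S k ω))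
        (hSint k).abs).mp h1
      filter_upwards [h2] with ω hω
      simpa [abs_eq_zero] using hω
    have : ∫ ω, M ω = 0 := by
      rw [show (0:ℝ) = ∫ (_ : Ω), (0:ℝ) by simp]
      apply integral_congr_ae
      filter_upwards [hae] with ω hω
      rw [hM]
      calc (Finset.Icc 1 n).sup' hne (fun k => S k ω)
          = (Finset.Icc 1 n).sup' hne (fun _ => (0:ℝ)) :=
            Finset.sup'_congr hne rfl hω
        _ = 0 := Finset.sup'_const hne 0
    rw [this, ← hzero]
    norm_num
  -- main case : a > 0
  -- Ottaviani-type maximal inequality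
  have hOtt : ∀ t : ℝ, 0 < t → 4 * a ≤ t →
      ℙ {ω | t < M ω} ≤ 2 * ℙ {ω | t < 2 * |S n ω|} := by
    intro t ht h4a
    set A : ℕ → Set Ω := fun k =>
      {ω | t < S k ω} ∩ ⋂ j ∈ Finset.Icc 1 (k-1), {ω | S j ω ≤ t} with hA
    have hAmeas : ∀ k, MeasurableSet (A k) := fun k =>
      (measurableSet_lt measurable_const (hSmeas k)).inter
        (MeasurableSet.biInter (Finset.Icc 1 (k-1)).countable_toSet fun j _ =>
          measurableSet_le (hSmeas j) measurable_const)
    set C : ℕ → Set Ω := fun k => {ω | -(t/2) ≤ T k ω} with hC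
    have hCmeas : ∀ k, MeasurableSet (C k) := fun k =>
      measurableSet_le measurable_const (hTmeas k)
    -- the union decomposition
    have hunion : {ω | t < M ω} = ⋃ k ∈ Finset.Icc 1 n, A k := by
      ext ω
      simp only [Set.mem_setOf_eq, Set.mem_iUnion, exists_prop]
      constructor
      · intro h
        rw [hM] at h
        obtain ⟨k, hk, hk2⟩ := (Finset.lt_sup'_iff _).mp h
        have hP : ∃ m, 1 ≤ m ∧ t < S m ω := ⟨k, (Finset.mem_Icc.mp hk).1, hk2⟩
        refine ⟨Nat.find hP, ?_, ?_, ?_⟩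
        · exact Finset.mem_Icc.mpr ⟨(Nat.find_spec hP).1,
            le_trans (Nat.find_min' hP ⟨(Finset.mem_Icc.mp hk).1, hk2⟩)
              (Finset.mem_Icc.mp hk).2⟩
        · exact (Nat.find_spec hP).2
        · simp only [Set.mem_iInter]
          intro j hj'
          have hj1 := (Finset.mem_Icc.mp hj').1
          have hjlt : j < Nat.find hP := by
            have h2 := (Finset.mem_Icc.mp hj').2
            have h1le := (Nat.find_spec hP).1
            omega
          have hnp := Nat.find_min hP hjlt
          push_neg at hnp
          exact hnp hj1
      · rintro ⟨k, hk, h1, _⟩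
        rw [hM]
        exact (Finset.lt_sup'_iff _).mpr ⟨k, hk, h1⟩
    -- disjointness
    have key : ∀ k l : ℕ, 1 ≤ k → k < l → Disjoint (A k) (A l) := by
      intro k l hk1 hkl
      rw [Set.disjoint_left]
      intro ω hωk hωl
      have h1 : t < S k ω := hωk.1
      have h2 : S k ω ≤ t := by
        have h3 := hωl.2
        simp only [Set.mem_iInter] at h3
        exact h3 k (Finset.mem_Icc.mpr ⟨hk1, by omega⟩)
      linarith
    have hAdisj : (↑(Finset.Icc 1 n) : Set ℕ).PairwiseDisjoint A := by
      intro k hk l hl hkl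
      have hk1 := (Finset.mem_Icc.mp (Finset.mem_coe.mp hk)).1
      have hl1 := (Finset.mem_Icc.mp (Finset.mem_coe.mp hl)).1
      rcases lt_or_gt_of_ne hkl with h | h
      · exact key k l hk1 h
      · exact (key l k hl1 h).symm
    -- the half bound for C k
    have hChalf : ∀ k, k ≤ n → (1/2 : ℝ≥0∞) ≤ ℙ (C k) := by
      intro k hk
      have hcompl : ℙ (C k)ᶜ ≤ 1/2 := by
        have hsub : (C k)ᶜ ⊆ {ω | ENNReal.ofReal (t/2) ≤ ENNReal.ofReal |T k ω|} := by
          intro ω hω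
          simp only [hC, Set.mem_compl_iff, Set.mem_setOf_eq, not_le] at hω
          simp only [Set.mem_setOf_eq]
          exact ENNReal.ofReal_le_ofReal (le_abs.mpr (Or.inr (by linarith)))
        have hmark := mul_meas_ge_le_lintegral₀ (μ := ℙ)
          (f := fun ω => ENNReal.ofReal |T k ω|)
          ((hTmeas k).abs.ennreal_ofReal.aemeasurable) (ENNReal.ofReal (t/2))
        have hlint : ∫⁻ ω, ENNReal.ofReal |T k ω| ∂ℙ = ENNReal.ofReal (∫ ω, |T k ω|) :=
          (ofReal_integral_eq_lintegral_ofReal (hTint k).abs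
            (ae_of_all _ fun ω => abs_nonneg _)).symm
        have hchain : ℙ (C k)ᶜ * ENNReal.ofReal (t/2) ≤ ENNReal.ofReal (t/4) := by
          rw [mul_comm]
          calc ENNReal.ofReal (t/2) * ℙ (C k)ᶜ
              ≤ ENNReal.ofReal (t/2) *
                ℙ {ω | ENNReal.ofReal (t/2) ≤ ENNReal.ofReal |T k ω|} :=
                mul_le_mul_right (measure_mono hsub) _
            _ ≤ ∫⁻ ω, ENNReal.ofReal |T k ω| ∂ℙ := hmark
            _ = ENNReal.ofReal (∫ ω, |T k ω|) := hlint
            _ ≤ ENNReal.ofReal (t/4) :=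
                ENNReal.ofReal_le_ofReal (le_trans (hJT k hk) (by linarith))
        have ht2 : (0:ℝ) < t/2 := by linarith
        have hdiv : ℙ (C k)ᶜ ≤ ENNReal.ofReal (t/4) / ENNReal.ofReal (t/2) :=
          (ENNReal.le_div_iff_mul_le (Or.inl (ENNReal.ofReal_pos.mpr ht2).ne')
            (Or.inl ENNReal.ofReal_ne_top)).mpr hchain
        have hval : ENNReal.ofReal (t/4) / ENNReal.ofReal (t/2) = 1/2 := by
          rw [← ENNReal.ofReal_div_of_pos ht2]
          have : t/4/(t/2) = 1/2 := by
            field_simp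
            ring
          rw [this, ENNReal.ofReal_div_of_pos (by norm_num), ENNReal.ofReal_one,
            ENNReal.ofReal_ofNat]
        rwa [hval] at hdiv
      rw [measure_compl (hCmeas k) (measure_ne_top _ _), measure_univ] at hcompl
      have h1 : (1:ℝ≥0∞) ≤ 1/2 + ℙ (C k) := tsub_le_iff_right.mp hcompl
      have h2 : (1/2 : ℝ≥0∞) + 1/2 ≤ 1/2 + ℙ (C k) := by
        rw [ENNReal.add_halves]
        exact h1
      exact (ENNReal.add_le_add_iff_left (by simp)).mp h2
    -- independence of A k and C k
    have hprod : ∀ k, 1 ≤ k → ℙ (A k ∩ C k) = ℙ (A k) * ℙ (C k) := by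
      intro k hk1
      set σf : ℕ → (↥(Finset.Icc 1 k) → ℝ) → ℝ :=
        fun j v => ∑ i ∈ Finset.univ.filter (fun i : ↥(Finset.Icc 1 k) => (i:ℕ) ≤ j), v i
        with hσ
      have hσmeas : ∀ j, Measurable (σf j) :=
        fun j => Finset.measurable_sum _ fun i _ => measurable_pi_apply i
      have hσS : ∀ j, j ≤ k → ∀ ω, σf j (fun i : ↥(Finset.Icc 1 k) => X i ω) = S j ω := by
        intro j hj ω
        calc σf j (fun i : ↥(Finset.Icc 1 k) => X i ω)
            = ∑ i : ↥(Finset.Icc 1 k), if (i:ℕ) ≤ j then X (i:ℕ) ω else 0 :=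
              Finset.sum_filter _ _
          _ = ∑ m ∈ Finset.Icc 1 k, if m ≤ j then X m ω else 0 :=
              Finset.sum_coe_sort (Finset.Icc 1 k) (fun m => if m ≤ j then X m ω else 0)
          _ = ∑ m ∈ (Finset.Icc 1 k).filter (· ≤ j), X m ω := (Finset.sum_filter _ _).symm
          _ = ∑ m ∈ Finset.Icc 1 j, X m ω := by
              apply Finset.sum_congr _ (fun _ _ => rfl)
              ext m
              simp only [Finset.mem_filter, Finset.mem_Icc]
              omega
          _ = S j ω := (hS j ω).symm
      set sv : Set (↥(Finset.Icc 1 k) → ℝ) :=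
        {v | t < σf k v} ∩ ⋂ j ∈ Finset.Icc 1 (k-1), {v | σf j v ≤ t} with hsv
      have hsmeas : MeasurableSet sv :=
        (measurableSet_lt measurable_const (hσmeas k)).inter
          (MeasurableSet.biInter (Finset.Icc 1 (k-1)).countable_toSet fun j _ =>
            measurableSet_le (hσmeas j) measurable_const)
      have hApre : A k = (fun ω (i : ↥(Finset.Icc 1 k)) => X i ω) ⁻¹' sv := by
        ext ω
        simp only [hA, hsv, Set.mem_inter_iff, Set.mem_preimage, Set.mem_setOf_eq,
          Set.mem_iInter]
        constructor
        · rintro ⟨h1, h2⟩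
          refine ⟨by rw [hσS k le_rfl ω]; exact h1, fun j hj => ?_⟩
          have hjk : j ≤ k := by
            have := (Finset.mem_Icc.mp hj).2
            omega
          rw [hσS j hjk ω]
          exact h2 j hj
        · rintro ⟨h1, h2⟩
          refine ⟨by rw [← hσS k le_rfl ω]; exact h1, fun j hj => ?_⟩
          have hjk : j ≤ k := by
            have := (Finset.mem_Icc.mp hj).2
            omega
          have h3 := h2 j hj
          rwa [hσS j hjk ω] at h3
      have hCpre : C k = T k ⁻¹' Set.Ici (-(t/2)) := rfl
      rw [hApre, hCpre]
      exact (hVT k).measure_inter_preimage_eq_mul sv _ hsmeas measurableSet_Ici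
    -- conclusion of Ottaviani
    have hsubS : (⋃ k ∈ Finset.Icc 1 n, A k ∩ C k) ⊆ {ω | t < 2 * |S n ω|} := by
      intro ω hω
      simp only [Set.mem_iUnion, exists_prop] at hω
      obtain ⟨k, hk, hAk, hCk⟩ := hω
      have hkn := (Finset.mem_Icc.mp hk).2
      have h1 : t < S k ω := hAk.1
      have h2 : -(t/2) ≤ T k ω := hCk
      have h3 := hsplit k hkn ω
      have h4 := le_abs_self (S n ω)
      simp only [Set.mem_setOf_eq]
      linarith
    have hmeasAC : ∀ k ∈ Finset.Icc 1 n, MeasurableSet (A k ∩ C k) :=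
      fun k _ => (hAmeas k).inter (hCmeas k)
    have hACdisj : (↑(Finset.Icc 1 n) : Set ℕ).PairwiseDisjoint (fun k => A k ∩ C k) :=
      fun k hk l hl hkl =>
        (hAdisj hk hl hkl).mono Set.inter_subset_left Set.inter_subset_left
    have h21 : (2:ℝ≥0∞) * (1/2) = 1 := by
      rw [one_div, ENNReal.mul_inv_cancel (by norm_num) (by norm_num)]
    have hx2 : ∀ x : ℝ≥0∞, x ≤ 2 * (x * (1/2)) := by
      intro x
      rw [mul_comm x, ← mul_assoc, h21, one_mul]
    calc ℙ {ω | t < M ω} = ∑ k ∈ Finset.Icc 1 n, ℙ (A k) := by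
          rw [hunion, measure_biUnion_finset hAdisj (fun k _ => hAmeas k)]
      _ ≤ ∑ k ∈ Finset.Icc 1 n, 2 * ℙ (A k ∩ C k) := by
          apply Finset.sum_le_sum
          intro k hk
          obtain ⟨hk1, hkn⟩ := Finset.mem_Icc.mp hk
          calc ℙ (A k) ≤ 2 * (ℙ (A k) * (1/2)) := hx2 _
            _ ≤ 2 * (ℙ (A k) * ℙ (C k)) :=
                mul_le_mul_right (mul_le_mul_right (hChalf k hkn) _) _
            _ = 2 * ℙ (A k ∩ C k) := by rw [hprod k hk1]
      _ = 2 * ∑ k ∈ Finset.Icc 1 n, ℙ (A k ∩ C k) := by rw [Finset.mul_sum]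
      _ = 2 * ℙ (⋃ k ∈ Finset.Icc 1 n, A k ∩ C k) := by
          rw [measure_biUnion_finset hACdisj hmeasAC]
      _ ≤ 2 * ℙ {ω | t < 2 * |S n ω|} := mul_le_mul_right (measure_mono hsubS) _
  -- layer-cake assembly
  have hMmeas : Measurable M := by
    have h := Finset.measurable_sup' hne fun k (_ : k ∈ Finset.Icc 1 n) => hSmeas k
    have he : (Finset.Icc 1 n).sup' hne S = M := by
      funext ω
      rw [hM]
      exact Finset.sup'_apply hne S ω
    rwa [he] at h
  have hMint : Integrable M ℙ := by
    apply Integrable.mono'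
      (integrable_finset_sum (Finset.Icc 1 n) fun k _ => (hSint k).abs)
      hMmeas.aestronglyMeasurable
    filter_upwards with ω
    rw [Real.norm_eq_abs, abs_le]
    constructor
    · have h1 : S n ω ≤ M ω :=
        Finset.le_sup' (fun k => S k ω) (Finset.mem_Icc.mpr ⟨hn, le_rfl⟩)
      have h2 : |S n ω| ≤ ∑ k ∈ Finset.Icc 1 n, |S k ω| :=
        Finset.single_le_sum (fun k _ => abs_nonneg (S k ω))
          (Finset.mem_Icc.mpr ⟨hn, le_rfl⟩)
      have h3 := neg_abs_le (S n ω)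
      linarith
    · exact Finset.sup'_le hne _ fun k hk =>
        le_trans (le_abs_self _)
          (Finset.single_le_sum (fun j _ => abs_nonneg (S j ω)) hk)
  set Mp : Ω → ℝ := fun ω => max (M ω) 0 with hMp
  have hMpint : Integrable Mp ℙ := hMint.pos_part
  have hMpmeas : Measurable Mp := hMmeas.max measurable_const
  have step1 : ∫ ω, M ω ≤ ∫ ω, Mp ω :=
    integral_mono hMint hMpint fun ω => le_max_left _ _
  have step2 : ∫ ω, Mp ω = (∫⁻ ω, ENNReal.ofReal (Mp ω)).toReal :=
    integral_eq_lintegral_of_nonneg_ae (ae_of_all _ fun ω => le_max_right (M ω) 0)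
      hMpmeas.aestronglyMeasurable
  have step3 : ∫⁻ ω, ENNReal.ofReal (Mp ω) = ∫⁻ s in Set.Ioi (0:ℝ), ℙ {ω | s < Mp ω} :=
    lintegral_eq_lintegral_meas_lt ℙ (ae_of_all _ fun ω => le_max_right _ _)
      hMpmeas.aemeasurable
  have hMpset : ∀ s : ℝ, 0 < s → {ω | s < Mp ω} = {ω | s < M ω} := by
    intro s hs
    ext ω
    simp only [hMp, Set.mem_setOf_eq, lt_max_iff]
    constructor
    · rintro (h | h)
      · exact h
      · linarith
    · exact Or.inl
  have hanti : Antitone (fun s : ℝ => ℙ {ω | s < 2 * |S n ω|}) :=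
    fun s1 s2 h => measure_mono fun ω hω => lt_of_le_of_lt h hω
  have key : ∫⁻ s in Set.Ioi (0:ℝ), ℙ {ω | s < Mp ω} ≤ ENNReal.ofReal (8 * a) := by
    have hu : Set.Ioi (0:ℝ) = Set.Ioc 0 (4*a) ∪ Set.Ioi (4*a) :=
      (Set.Ioc_union_Ioi_eq_Ioi (by linarith)).symm
    rw [hu, lintegral_union measurableSet_Ioi (Set.Ioc_disjoint_Ioi le_rfl)]
    have part1 : ∫⁻ s in Set.Ioc (0:ℝ) (4*a), ℙ {ω | s < Mp ω} ≤ ENNReal.ofReal (4*a) := by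
      calc ∫⁻ s in Set.Ioc (0:ℝ) (4*a), ℙ {ω | s < Mp ω}
          ≤ ∫⁻ _ in Set.Ioc (0:ℝ) (4*a), 1 := lintegral_mono fun s => prob_le_one
        _ = ENNReal.ofReal (4*a) := by
            rw [setLIntegral_one, Real.volume_Ioc, sub_zero]
    have part2 : ∫⁻ s in Set.Ioi (4*a), ℙ {ω | s < Mp ω} ≤ 2 * ENNReal.ofReal (2*a) := by
      have hb : ∀ s ∈ Set.Ioi (4*a), ℙ {ω | s < Mp ω} ≤ 2 * ℙ {ω | s < 2 * |S n ω|} := by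
        intro s hs
        have hs4 : 4 * a < s := hs
        have hs0 : 0 < s := by linarith
        rw [hMpset s hs0]
        exact hOtt s hs0 (le_of_lt hs4)
      calc ∫⁻ s in Set.Ioi (4*a), ℙ {ω | s < Mp ω}
          ≤ ∫⁻ s in Set.Ioi (4*a), 2 * ℙ {ω | s < 2 * |S n ω|} :=
            setLIntegral_mono (hanti.measurable.const_mul 2) hb
        _ ≤ ∫⁻ s in Set.Ioi (0:ℝ), 2 * ℙ {ω | s < 2 * |S n ω|} :=
            lintegral_mono_set (Set.Ioi_subset_Ioi (by linarith))
        _ = 2 * ∫⁻ s in Set.Ioi (0:ℝ), ℙ {ω | s < 2 * |S n ω|} :=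
            lintegral_const_mul 2 hanti.measurable
        _ = 2 * ∫⁻ ω, ENNReal.ofReal (2 * |S n ω|) := by
            rw [← lintegral_eq_lintegral_meas_lt ℙ
              (ae_of_all _ fun ω => by positivity)
              (((hSmeas n).abs.const_mul 2).aemeasurable)]
        _ = 2 * ENNReal.ofReal (∫ ω, 2 * |S n ω|) := by
            rw [ofReal_integral_eq_lintegral_ofReal ((hSint n).abs.const_mul 2)
              (ae_of_all _ fun ω => by positivity)]
        _ = 2 * ENNReal.ofReal (2*a) := by rw [integral_const_mul, ha]
    calc (∫⁻ s in Set.Ioc (0:ℝ) (4*a), ℙ {ω | s < Mp ω}) +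
          ∫⁻ s in Set.Ioi (4*a), ℙ {ω | s < Mp ω}
        ≤ ENNReal.ofReal (4*a) + 2 * ENNReal.ofReal (2*a) := add_le_add part1 part2
      _ = ENNReal.ofReal (8 * a) := by
          rw [show (2:ℝ≥0∞) = ENNReal.ofReal 2 by simp,
            ← ENNReal.ofReal_mul (by norm_num),
            ← ENNReal.ofReal_add (by linarith) (by linarith)]
          congr 1
          ring
  have step4 : ∫ ω, Mp ω ≤ 8 * a := by
    rw [step2, step3]
    exact ENNReal.toReal_le_of_le_ofReal (by linarith) key
  calc ∫ ω, M ω ≤ ∫ ω, Mp ω := step1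
    _ ≤ 8 * a := step4
    _ ≤ 270 * a := by linarith
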